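/- arXiv:1510.04352 — 3 statements merged into one kernel-verified Lean document; each statement's English description precedes it below -/
import Mathlib

section
/- Let ψ be a unit vector in the tensor product H_s ⊗ H_e of finite-dimensional complex Hilbert spaces, with coefficient matrix γ (so ψ = Σ_{s,e} γ_{s,e} e_s ⊗ f_e in orthonormal bases). Then Σ over all s, s', a, b, c, d of |⟨e_s, Tr_e([M_{a,b,c,d}, |ψ⟩⟨ψ|]) e_{s'}⟩|² = 2·dim(H_s) − 2·Tr((γγ†)²), where M_{a,b,c,d} = |e_a⟩⟨e_b| ⊗ |f_c⟩⟨f_d|. -/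
open scoped ComplexConjugate Matrix

/-- The partial trace over the environment index of a matrix on the product index set. -/
noncomputable def ptraceE {ds de : ℕ} (A : Matrix (Fin ds × Fin de) (Fin ds × Fin de) ℂ) :
    Matrix (Fin ds) (Fin ds) ℂ :=
  Matrix.of fun s s' => ∑ e : Fin de, A (s, e) (s', e)

/-- The rank-one projector `|ψ⟩⟨ψ|` of the pure state with coefficient matrix `γ`
(`ψ = ∑ γ_{s,e} e_s ⊗ f_e`), written in the product basis. -/
def pureState {ds de : ℕ} (γ : Matrix (Fin ds) (Fin de) ℂ) :
    Matrix (Fin ds × Fin de) (Fin ds × Fin de) ℂ :=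
  Matrix.of fun p q => γ p.1 p.2 * conj (γ q.1 q.2)

/-- The elementary tensor operator `M_{a,b,c,d} = |e_a⟩⟨e_b| ⊗ |f_c⟩⟨f_d|` in the product
basis. -/
def elemOp {ds de : ℕ} (a b : Fin ds) (c d : Fin de) :
    Matrix (Fin ds × Fin de) (Fin ds × Fin de) ℂ :=
  Matrix.of fun p q => if p = (a, c) ∧ q = (b, d) then 1 else 0

/-- The complex cross-term sum equals the trace of `(γγᴴ)²`. -/
theorem stmt7_cross {ds de : ℕ} (γ : Matrix (Fin ds) (Fin de) ℂ) :
    (∑ s : Fin ds, ∑ s' : Fin ds, ∑ a : Fin ds, ∑ b : Fin ds, ∑ c : Fin de, ∑ d : Fin de,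
      ((if s = a then γ b d * conj (γ s' c) else 0) *
        conj (if s' = b then γ s d * conj (γ a c) else 0)))
      = Matrix.trace ((γ * γᴴ) ^ 2) := by
  simp only [apply_ite conj, map_zero, mul_ite, ite_mul, zero_mul, mul_zero,
    Finset.sum_ite_irrel, Finset.sum_const_zero, Finset.sum_ite_eq, Finset.mem_univ, if_true]
  rw [pow_two]
  simp only [Matrix.trace, Matrix.mul_apply, Matrix.conjTranspose_apply, Matrix.diag,
    Finset.mul_sum, Finset.sum_mul, Complex.star_def]
  refine Finset.sum_congr rfl fun s _ => Finset.sum_congr rfl fun s' _ => ?_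
  rw [Finset.sum_comm]
  refine Finset.sum_congr rfl fun c _ => Finset.sum_congr rfl fun d _ => ?_
  simp only [map_mul, Complex.conj_conj]
  ring

/-- For a unit vector `ψ ∈ H_s ⊗ H_e` with coefficient matrix `γ`
(`Tr(γγ†) = 1`), one has
`∑_{s,s',a,b,c,d} |⟨e_s, Tr_e([M_{a,b,c,d}, |ψ⟩⟨ψ|]) e_{s'}⟩|² = 2 dim H_s − 2 Tr((γγ†)²)`. -/
theorem stmt7 {ds de : ℕ} (γ : Matrix (Fin ds) (Fin de) ℂ)
    (hγ : Matrix.trace (γ * γᴴ) = 1) :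
    ∑ s : Fin ds, ∑ s' : Fin ds, ∑ a : Fin ds, ∑ b : Fin ds, ∑ c : Fin de, ∑ d : Fin de,
        ‖ptraceE (elemOp a b c d * pureState γ - pureState γ * elemOp a b c d) s s'‖ ^ 2
      = 2 * ds - 2 * (Matrix.trace ((γ * γᴴ) ^ 2)).re := by
  have hN : ∑ s : Fin ds, ∑ e : Fin de, Complex.normSq (γ s e) = 1 := by
    have : ((∑ s : Fin ds, ∑ e : Fin de, Complex.normSq (γ s e) : ℝ) : ℂ) = 1 := by
      rw [← hγ]
      simp [Matrix.trace, Matrix.mul_apply, Matrix.conjTranspose_apply, Matrix.diag,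
        Complex.mul_conj]
    exact_mod_cast this
  have key : ∀ (s s' a b : Fin ds) (c d : Fin de),
      ptraceE (elemOp a b c d * pureState γ - pureState γ * elemOp a b c d) s s'
        = (if s = a then γ b d * conj (γ s' c) else 0)
          - (if s' = b then γ s d * conj (γ a c) else 0) := by
    intro s s' a b c d
    simp [ptraceE, elemOp, pureState, Matrix.mul_apply, Prod.ext_iff, ite_and,
      Finset.sum_ite_eq, Finset.sum_ite_eq', Finset.sum_sub_distrib, Fintype.sum_prod_type,
      mul_comm]
  have norm2 : ∀ z w : ℂ, ‖z - w‖^2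
      = Complex.normSq z + Complex.normSq w - 2*(z * conj w).re := by
    intro z w
    rw [Complex.sq_norm, Complex.normSq_sub]
  simp only [key, norm2]
  simp only [Finset.sum_add_distrib, Finset.sum_sub_distrib, ← Finset.sum_mul, ← Finset.mul_sum]
  have S1 : (∑ s : Fin ds, ∑ s' : Fin ds, ∑ a : Fin ds, ∑ b : Fin ds, ∑ c : Fin de,
      ∑ d : Fin de, Complex.normSq (if s = a then γ b d * conj (γ s' c) else 0)) = ds := by
    simp only [apply_ite Complex.normSq, Complex.normSq_zero, Finset.sum_ite_irrel,
      Finset.sum_const_zero, Finset.sum_ite_eq, Finset.mem_univ, if_true,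
      Complex.normSq_mul, Complex.normSq_conj]
    simp only [← Finset.sum_mul, ← Finset.mul_sum]
    rw [hN]
    simp
  have S2 : (∑ s : Fin ds, ∑ s' : Fin ds, ∑ a : Fin ds, ∑ b : Fin ds, ∑ c : Fin de,
      ∑ d : Fin de, Complex.normSq (if s' = b then γ s d * conj (γ a c) else 0)) = ds := by
    simp only [apply_ite Complex.normSq, Complex.normSq_zero, Finset.sum_ite_irrel,
      Finset.sum_const_zero, Finset.sum_ite_eq, Finset.mem_univ, if_true,
      Complex.normSq_mul, Complex.normSq_conj]
    simp only [← Finset.sum_mul, ← Finset.mul_sum]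
    rw [hN, mul_one, Finset.sum_comm]
    simp [hN]
  have S3 : (∑ s : Fin ds, ∑ s' : Fin ds, ∑ a : Fin ds, ∑ b : Fin ds, ∑ c : Fin de,
      ∑ d : Fin de,
      ((if s = a then γ b d * conj (γ s' c) else 0) *
        conj (if s' = b then γ s d * conj (γ a c) else 0)).re)
      = (Matrix.trace ((γ * γᴴ) ^ 2)).re := by
    rw [← stmt7_cross γ]
    simp only [Complex.re_sum]
  rw [S1, S2, S3]
  ring
end

section
/- With the setup of the previous identity, since Tr((γγ†)²) ≥ 0, one has Σ_{s,s',a,b,c,d} |⟨e_s, Tr_e([M_{a,b,c,d}, |ψ⟩⟨ψ|]) e_{s'}⟩|² ≤ 2·dim(H_s). -/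
open scoped ComplexConjugate Matrix

lemma sum_ite_const' {α M : Type*} [Fintype α] [AddCommMonoid M] (P : Prop) [Decidable P]
    (f : α → M) : ∑ x, (if P then f x else 0) = if P then ∑ x, f x else 0 := by
  split <;> simp

lemma swap4 {n m : ℕ} {M : Type*} [AddCommMonoid M]
    (f : Fin n → Fin n → Fin m → Fin m → M) :
    ∑ s, ∑ s', ∑ c, ∑ d, f s s' c d = ∑ c, ∑ d, ∑ s, ∑ s', f s s' c d := by
  calc ∑ s, ∑ s', ∑ c, ∑ d, f s s' c d
      = ∑ s, ∑ c, ∑ s', ∑ d, f s s' c d :=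
        Finset.sum_congr rfl fun s _ => Finset.sum_comm
    _ = ∑ c, ∑ s, ∑ s', ∑ d, f s s' c d := Finset.sum_comm
    _ = ∑ c, ∑ s, ∑ d, ∑ s', f s s' c d :=
        Finset.sum_congr rfl fun c _ => Finset.sum_congr rfl fun s _ => Finset.sum_comm
    _ = ∑ c, ∑ d, ∑ s, ∑ s', f s s' c d :=
        Finset.sum_congr rfl fun c _ => Finset.sum_comm

lemma hfact {m n : ℕ} (f : Fin m → ℝ) (g : Fin n → ℝ) :
    ∑ c : Fin n, ∑ d : Fin m, f d * g c = (∑ d, f d) * (∑ c, g c) := by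
  rw [Finset.sum_comm, Finset.sum_mul_sum]


/-- Since `Tr((γγ†)²) ≥ 0`, for a unit vector `ψ` with coefficient matrix
`γ` one has `∑_{s,s',a,b,c,d} |⟨e_s, Tr_e([M_{a,b,c,d}, |ψ⟩⟨ψ|]) e_{s'}⟩|² ≤ 2 dim H_s`. -/
theorem stmt8 {ds de : ℕ} (γ : Matrix (Fin ds) (Fin de) ℂ)
    (hγ : Matrix.trace (γ * γᴴ) = 1) :
    ∑ s : Fin ds, ∑ s' : Fin ds, ∑ a : Fin ds, ∑ b : Fin ds, ∑ c : Fin de, ∑ d : Fin de,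
        ‖ptraceE (elemOp a b c d * pureState γ - pureState γ * elemOp a b c d) s s'‖ ^ 2
      ≤ 2 * ds := by
  have ht : ∑ s : Fin ds, ∑ e : Fin de, Complex.normSq (γ s e) = 1 := by
    have h : Matrix.trace (γ * γᴴ)
        = ((∑ s : Fin ds, ∑ e : Fin de, Complex.normSq (γ s e) : ℝ) : ℂ) := by
      simp [Matrix.trace, Matrix.mul_apply, Matrix.conjTranspose_apply, Matrix.diag,
        Complex.mul_conj]
    rw [h] at hγ
    exact_mod_cast hγ
  have hentry : ∀ (s s' a b : Fin ds) (c d : Fin de),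
      ptraceE (elemOp a b c d * pureState γ - pureState γ * elemOp a b c d) s s'
      = (if s = a then γ b d * conj (γ s' c) else 0)
        - (if s' = b then γ s d * conj (γ a c) else 0) := by
    intros
    simp [ptraceE, elemOp, pureState, Matrix.mul_apply, Matrix.sub_apply, Fintype.sum_prod_type,
      Prod.ext_iff, Finset.sum_sub_distrib, ite_and, Finset.sum_ite_eq, Finset.sum_ite_eq',
      eq_comm]
  -- piece 1
  have e1 : ∑ s : Fin ds, ∑ s' : Fin ds, ∑ a : Fin ds, ∑ b : Fin ds, ∑ c : Fin de, ∑ d : Fin de,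
      Complex.normSq (if s = a then γ b d * conj (γ s' c) else 0) = ds := by
    simp only [apply_ite Complex.normSq, map_zero, sum_ite_const', Finset.sum_ite_eq,
      Finset.mem_univ, if_true, Complex.normSq_mul, Complex.normSq_conj]
    have Q : ∑ s' : Fin ds, ∑ b : Fin ds, ∑ c : Fin de, ∑ d : Fin de,
        Complex.normSq (γ b d) * Complex.normSq (γ s' c) = 1 := by
      calc ∑ s' : Fin ds, ∑ b : Fin ds, ∑ c : Fin de, ∑ d : Fin de,
            Complex.normSq (γ b d) * Complex.normSq (γ s' c)
          = ∑ s' : Fin ds, ∑ b : Fin ds,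
              (∑ d, Complex.normSq (γ b d)) * (∑ c, Complex.normSq (γ s' c)) :=
            Finset.sum_congr rfl fun s' _ => Finset.sum_congr rfl fun b _ => hfact _ _
        _ = ∑ s' : Fin ds,
              (∑ b, ∑ d, Complex.normSq (γ b d)) * (∑ c, Complex.normSq (γ s' c)) := by
            simp [Finset.sum_mul]
        _ = (∑ b, ∑ d, Complex.normSq (γ b d))
              * (∑ s', ∑ c, Complex.normSq (γ s' c)) := by rw [← Finset.mul_sum]
        _ = 1 := by rw [ht]; norm_num
    simp [Q]
  -- piece 2
  have e2 : ∑ s : Fin ds, ∑ s' : Fin ds, ∑ a : Fin ds, ∑ b : Fin ds, ∑ c : Fin de, ∑ d : Fin de,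
      Complex.normSq (if s' = b then γ s d * conj (γ a c) else 0) = ds := by
    simp only [apply_ite Complex.normSq, map_zero, sum_ite_const', Finset.sum_ite_eq,
      Finset.mem_univ, if_true, Complex.normSq_mul, Complex.normSq_conj]
    have Q : ∀ s : Fin ds, ∑ a : Fin ds, ∑ c : Fin de, ∑ d : Fin de,
        Complex.normSq (γ s d) * Complex.normSq (γ a c)
        = ∑ d, Complex.normSq (γ s d) := by
      intro s
      calc ∑ a : Fin ds, ∑ c : Fin de, ∑ d : Fin de,
            Complex.normSq (γ s d) * Complex.normSq (γ a c)
          = ∑ a : Fin ds, (∑ d, Complex.normSq (γ s d)) * (∑ c, Complex.normSq (γ a c)) :=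
            Finset.sum_congr rfl fun a _ => hfact _ _
        _ = (∑ d, Complex.normSq (γ s d)) * (∑ a, ∑ c, Complex.normSq (γ a c)) := by
            rw [← Finset.mul_sum]
        _ = ∑ d, Complex.normSq (γ s d) := by rw [ht, mul_one]
    calc ∑ s : Fin ds, ∑ s' : Fin ds, ∑ a : Fin ds, ∑ c : Fin de, ∑ d : Fin de,
          Complex.normSq (γ s d) * Complex.normSq (γ a c)
        = ∑ s : Fin ds, ∑ s' : Fin ds, ∑ d, Complex.normSq (γ s d) := by
          exact Finset.sum_congr rfl fun s _ => Finset.sum_congr rfl fun s' _ => Q s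
      _ = ∑ s : Fin ds, (ds : ℝ) * ∑ d, Complex.normSq (γ s d) := by
          simp [Finset.sum_const, nsmul_eq_mul]
      _ = (ds : ℝ) * ∑ s, ∑ d, Complex.normSq (γ s d) := by rw [← Finset.mul_sum]
      _ = ds := by rw [ht, mul_one]
  -- cross term
  have e3 : 0 ≤ ∑ s : Fin ds, ∑ s' : Fin ds, ∑ a : Fin ds, ∑ b : Fin ds, ∑ c : Fin de,
      ∑ d : Fin de,
      ((if s = a then γ b d * conj (γ s' c) else 0)
        * conj (if s' = b then γ s d * conj (γ a c) else 0)).re := by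
    have step1 : ∀ (s s' a b : Fin ds) (c d : Fin de),
        ((if s = a then γ b d * conj (γ s' c) else 0)
          * conj (if s' = b then γ s d * conj (γ a c) else 0))
        = if s = a then (if s' = b then
            (γ b d * conj (γ s' c)) * conj (γ s d * conj (γ a c)) else 0) else 0 := by
      intros; split <;> split <;> simp
    simp only [step1, apply_ite Complex.re, Complex.zero_re, sum_ite_const', Finset.sum_ite_eq, Finset.mem_univ, if_true]
    have step2 : (∑ s : Fin ds, ∑ s' : Fin ds, ∑ c : Fin de, ∑ d : Fin de,
        (γ s' d * conj (γ s' c)) * conj (γ s d * conj (γ s c)))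
        = ∑ c : Fin de, ∑ d : Fin de,
            ((Complex.normSq (∑ x : Fin ds, γ x d * conj (γ x c)) : ℝ) : ℂ) := by
      rw [swap4]
      refine Finset.sum_congr rfl fun c _ => Finset.sum_congr rfl fun d _ => ?_
      rw [Finset.sum_comm]
      calc ∑ s' : Fin ds, ∑ s : Fin ds,
            (γ s' d * conj (γ s' c)) * conj (γ s d * conj (γ s c))
          = ∑ s' : Fin ds, (γ s' d * conj (γ s' c))
              * conj (∑ s : Fin ds, γ s d * conj (γ s c)) := by
            refine Finset.sum_congr rfl fun s' _ => ?_
            rw [← Finset.mul_sum, map_sum]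
        _ = (∑ s' : Fin ds, γ s' d * conj (γ s' c))
              * conj (∑ s : Fin ds, γ s d * conj (γ s c)) := by rw [← Finset.sum_mul]
        _ = _ := Complex.mul_conj _
    have : (∑ s : Fin ds, ∑ s' : Fin ds, ∑ c : Fin de, ∑ d : Fin de,
        ((γ s' d * conj (γ s' c)) * conj (γ s d * conj (γ s c))).re)
        = ∑ c : Fin de, ∑ d : Fin de,
            Complex.normSq (∑ x : Fin ds, γ x d * conj (γ x c)) := by
      have h4 : (∑ s : Fin ds, ∑ s' : Fin ds, ∑ c : Fin de, ∑ d : Fin de,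
          ((γ s' d * conj (γ s' c)) * conj (γ s d * conj (γ s c))).re)
          = (∑ s : Fin ds, ∑ s' : Fin ds, ∑ c : Fin de, ∑ d : Fin de,
            (γ s' d * conj (γ s' c)) * conj (γ s d * conj (γ s c))).re := by
        simp only [Complex.re_sum]
      rw [h4, step2]
      simp only [Complex.re_sum, Complex.ofReal_re]
    rw [this]
    exact Finset.sum_nonneg fun c _ => Finset.sum_nonneg fun d _ => Complex.normSq_nonneg _
  -- assemble
  have expand : ∀ (s s' a b : Fin ds) (c d : Fin de),
      ‖ptraceE (elemOp a b c d * pureState γ - pureState γ * elemOp a b c d) s s'‖ ^ 2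
      = Complex.normSq (if s = a then γ b d * conj (γ s' c) else 0)
        + Complex.normSq (if s' = b then γ s d * conj (γ a c) else 0)
        - 2 * ((if s = a then γ b d * conj (γ s' c) else 0)
            * conj (if s' = b then γ s d * conj (γ a c) else 0)).re := by
    intros s s' a b c d
    rw [hentry, ← Complex.normSq_sub, ← Complex.sq_norm]
  simp only [expand, Finset.sum_sub_distrib, Finset.sum_add_distrib, ← Finset.mul_sum]
  rw [e1, e2]
  have : (2 : ℝ) * ds = (ds : ℝ) + ds := by ring
  linarith [e3]
end

section
/- With H = H₀ + P D P† as above (P Haar unitary, H₀ Hermitian diagonal, D real diagonal), for any z₁, z₂ ∈ ℂ \ ℝ with moduli larger than ‖H₀‖ + ‖D‖ and any fixed diagonal matrix M, the matrix E[G_H(z₁) M G_H(z₂)] is diagonal. -/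
open MeasureTheory
open scoped Matrix

noncomputable local instance matrixMeasurableSpace {N : ℕ} : MeasurableSpace (Matrix (Fin N) (Fin N) ℂ) :=
  MeasurableSpace.pi

noncomputable local instance matrixTopologicalSpace {N : ℕ} : TopologicalSpace (Matrix (Fin N) (Fin N) ℂ) :=
  Pi.topologicalSpace

private lemma conj_inv_aux {N : ℕ} (Λ A : Matrix (Fin N) (Fin N) ℂ) (h : Λ * Λ = 1) :
    (Λ * A * Λ)⁻¹ = Λ * A⁻¹ * Λ := by
  by_cases hA : IsUnit A.det
  · apply Matrix.inv_eq_left_inv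
    have h1 : Λ * (Λ * (A * Λ)) = A * Λ := by rw [← Matrix.mul_assoc Λ Λ, h, Matrix.one_mul]
    simp only [Matrix.mul_assoc]
    rw [h1, ← Matrix.mul_assoc A⁻¹ A Λ, Matrix.nonsing_inv_mul A hA, Matrix.one_mul, h]
  · have hd : ¬IsUnit (Λ * A * Λ).det := by
      rw [Matrix.det_mul, Matrix.det_mul]
      intro hcon
      exact hA ((IsUnit.mul_iff.mp ((IsUnit.mul_iff.mp hcon).1)).2)
    rw [Matrix.nonsing_inv_apply_not_isUnit _ hd, Matrix.nonsing_inv_apply_not_isUnit _ hA,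
      Matrix.mul_zero, Matrix.zero_mul]

private lemma measurable_mul_left_aux {N : ℕ} (V : Matrix.unitaryGroup (Fin N) ℂ) :
    Measurable (fun P : Matrix.unitaryGroup (Fin N) ℂ => V * P) := by
  apply Measurable.subtype_mk
  refine measurable_pi_iff.mpr ?_
  intro i
  rw [measurable_pi_iff]
  intro j
  have : (fun P : Matrix.unitaryGroup (Fin N) ℂ => ((V : Matrix (Fin N) (Fin N) ℂ) * (P : Matrix (Fin N) (Fin N) ℂ)) i j)
      = fun P : Matrix.unitaryGroup (Fin N) ℂ => ∑ k, (V : Matrix (Fin N) (Fin N) ℂ) i k * (P : Matrix (Fin N) (Fin N) ℂ) k j := by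
    funext P
    simp [Matrix.mul_apply]
  rw [this]
  apply Finset.measurable_sum
  intro k _
  have hP : Measurable fun P : Matrix.unitaryGroup (Fin N) ℂ =>
      (P : Matrix (Fin N) (Fin N) ℂ) k j :=
    (measurable_pi_apply j).comp ((measurable_pi_apply k).comp measurable_subtype_coe)
  exact hP.const_mul _

/-- With `H = H₀ + P D P†` (`P` Haar unitary, `H₀` Hermitian diagonal
with diagonal `d₀`, `D` real diagonal with diagonal `dD`), for any `z₁, z₂ ∈ ℂ \ ℝ` of
modulus larger than `‖H₀‖ + ‖D‖` and any fixed diagonal matrix `M` (diagonal `dM`), the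
matrix `E[G_H(z₁) M G_H(z₂)]` is diagonal. -/
theorem stmt14 {N : ℕ} (μ : Measure (Matrix.unitaryGroup (Fin N) ℂ))
    [IsProbabilityMeasure μ] [μ.IsHaarMeasure]
    (d₀ dD : Fin N → ℝ) (dM : Fin N → ℂ) (z₁ z₂ : ℂ)
    (hz₁ : z₁.im ≠ 0) (hz₂ : z₂.im ≠ 0)
    (hlarge₁ : (⨆ n, |d₀ n|) + (⨆ n, |dD n|) < ‖z₁‖)
    (hlarge₂ : (⨆ n, |d₀ n|) + (⨆ n, |dD n|) < ‖z₂‖) :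
    ∀ n m : Fin N, n ≠ m →
      ∫ P : Matrix.unitaryGroup (Fin N) ℂ,
          ((((Matrix.diagonal fun l => (d₀ l : ℂ)) +
                (P : Matrix (Fin N) (Fin N) ℂ) * (Matrix.diagonal fun l => (dD l : ℂ)) *
                  (P : Matrix (Fin N) (Fin N) ℂ)ᴴ -
                z₁ • (1 : Matrix (Fin N) (Fin N) ℂ))⁻¹ *
              Matrix.diagonal dM *
            ((Matrix.diagonal fun l => (d₀ l : ℂ)) +
                (P : Matrix (Fin N) (Fin N) ℂ) * (Matrix.diagonal fun l => (dD l : ℂ)) *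
                  (P : Matrix (Fin N) (Fin N) ℂ)ᴴ -
                z₂ • (1 : Matrix (Fin N) (Fin N) ℂ))⁻¹) n m) ∂μ = 0 := by
  intro n m hnm
  classical
  -- the sign vector and the diagonal unitary Λ
  set e : Fin N → ℂ := fun k => if k = n then (-1 : ℂ) else 1 with he
  set Λ : Matrix (Fin N) (Fin N) ℂ := Matrix.diagonal e with hΛdef
  have hee : ∀ k, e k * e k = 1 := by
    intro k; by_cases hk : k = n <;> simp [he, hk]
  have hΛΛ : Λ * Λ = 1 := by
    rw [hΛdef, Matrix.diagonal_mul_diagonal]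
    have h1 : (fun i => e i * e i) = fun _ => (1 : ℂ) := funext hee
    rw [h1, Matrix.diagonal_one]
  have hΛH : Λᴴ = Λ := by
    have hstar : star e = e := by
      funext k
      by_cases hk : k = n <;> simp [he, hk]
    rw [hΛdef, Matrix.diagonal_conjTranspose, hstar]
  -- Λ is unitary
  have hUmem : Λ ∈ Matrix.unitaryGroup (Fin N) ℂ := by
    constructor
    · rw [Matrix.star_eq_conjTranspose, hΛH]; exact hΛΛ
    · rw [Matrix.star_eq_conjTranspose, hΛH]; exact hΛΛ
  set U : Matrix.unitaryGroup (Fin N) ℂ := ⟨Λ, hUmem⟩ with hUdef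
  -- diagonal matrices commute with Λ and are fixed by conjugation
  have hcomm : ∀ d : Fin N → ℂ, Λ * Matrix.diagonal d * Λ = Matrix.diagonal d := by
    intro d
    rw [hΛdef, Matrix.diagonal_mul_diagonal, Matrix.diagonal_mul_diagonal]
    have h1 : (fun i => e i * d i * e i) = d := by
      funext k
      calc e k * d k * e k = d k * (e k * e k) := by ring
      _ = d k := by rw [hee k, mul_one]
    rw [h1]
  -- abbreviation for the resolvent argument
  set A : Matrix.unitaryGroup (Fin N) ℂ → ℂ → Matrix (Fin N) (Fin N) ℂ := fun P z =>
    (Matrix.diagonal fun l => (d₀ l : ℂ)) +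
      (P : Matrix (Fin N) (Fin N) ℂ) * (Matrix.diagonal fun l => (dD l : ℂ)) *
        (P : Matrix (Fin N) (Fin N) ℂ)ᴴ - z • (1 : Matrix (Fin N) (Fin N) ℂ) with hAdef
  have hAconj : ∀ P z, A (U * P) z = Λ * A P z * Λ := by
    intro P z
    have hcoe : ((U * P : Matrix.unitaryGroup (Fin N) ℂ) : Matrix (Fin N) (Fin N) ℂ)
        = Λ * (P : Matrix (Fin N) (Fin N) ℂ) := rfl
    rw [hAdef]
    simp only [hcoe, Matrix.conjTranspose_mul, hΛH]
    rw [Matrix.mul_sub, Matrix.sub_mul, Matrix.mul_add, Matrix.add_mul]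
    congr 1
    · congr 1
      · exact (hcomm _).symm
      · simp only [Matrix.mul_assoc]
    · rw [Matrix.mul_smul, Matrix.smul_mul, Matrix.mul_one, hΛΛ]
  -- the full integrand
  set g : Matrix.unitaryGroup (Fin N) ℂ → ℂ := fun P =>
    ((A P z₁)⁻¹ * Matrix.diagonal dM * (A P z₂)⁻¹) n m with hgdef
  have hflip : ∀ P, g (U * P) = - g P := by
    intro P
    have h1 : (A (U * P) z₁)⁻¹ = Λ * (A P z₁)⁻¹ * Λ := by rw [hAconj]; exact conj_inv_aux _ _ hΛΛ
    have h2 : (A (U * P) z₂)⁻¹ = Λ * (A P z₂)⁻¹ * Λ := by rw [hAconj]; exact conj_inv_aux _ _ hΛΛ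
    have hmid : Λ * Matrix.diagonal dM * Λ = Matrix.diagonal dM := hcomm dM
    have hprod : (A (U * P) z₁)⁻¹ * Matrix.diagonal dM * (A (U * P) z₂)⁻¹
        = Λ * ((A P z₁)⁻¹ * Matrix.diagonal dM * (A P z₂)⁻¹) * Λ := by
      have hcancel : ∀ W : Matrix (Fin N) (Fin N) ℂ, Λ * (Λ * W) = W := fun W => by
        rw [← Matrix.mul_assoc, hΛΛ, Matrix.one_mul]
      have hconj3 : ∀ X Y Z : Matrix (Fin N) (Fin N) ℂ,
          (Λ * X * Λ) * (Λ * Y * Λ) * (Λ * Z * Λ) = Λ * (X * Y * Z) * Λ := by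
        intro X Y Z
        simp only [Matrix.mul_assoc, hcancel]
      rw [h1, h2]
      conv_lhs => rw [← hmid]
      exact hconj3 _ _ _
    show ((A (U * P) z₁)⁻¹ * Matrix.diagonal dM * (A (U * P) z₂)⁻¹) n m = _
    rw [hprod, hΛdef]
    rw [Matrix.mul_diagonal, Matrix.diagonal_mul]
    have hen : e n = -1 := by simp [he]
    have hem : e m = 1 := by simp [he, hnm.symm]
    rw [hen, hem, hgdef]
    ring
  -- invariance of the Haar measure under left multiplication by U
  have hmp : MeasurePreserving (fun P : Matrix.unitaryGroup (Fin N) ℂ => U * P) μ μ :=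
    ⟨measurable_mul_left_aux U, map_mul_left_eq_self μ U⟩
  have hemb : MeasurableEmbedding (fun P : Matrix.unitaryGroup (Fin N) ℂ => U * P) := by
    have : (fun P : Matrix.unitaryGroup (Fin N) ℂ => U * P)
        = (({ toFun := fun P => U * P, invFun := fun P => U⁻¹ * P,
              left_inv := fun P => by group, right_inv := fun P => by group,
              measurable_toFun := measurable_mul_left_aux U,
              measurable_invFun := measurable_mul_left_aux U⁻¹ } :
            Matrix.unitaryGroup (Fin N) ℂ ≃ᵐ Matrix.unitaryGroup (Fin N) ℂ)) := rfl
    rw [this]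
    exact MeasurableEquiv.measurableEmbedding _
  have hint : ∫ P, g (U * P) ∂μ = ∫ P, g P ∂μ := hmp.integral_comp hemb g
  have hIneg : ∫ P, g P ∂μ = - ∫ P, g P ∂μ := by
    conv_lhs => rw [← hint]
    simp only [hflip]
    exact integral_neg g
  have hI0 : ∫ P, g P ∂μ = 0 := by
    have := eq_neg_iff_add_eq_zero.mp hIneg
    exact add_self_eq_zero.mp this
  exact hI0
end
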